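/- Let n ≥ 1. Let L be a real n×n matrix, f : ℝⁿ → ℝⁿ a function, η ∈ ℝⁿ, and R₁, …, R_n, J_F symmetric real n×n matrices, and suppose that for all x ∈ ℝⁿ: xᵀf(x) = 0 and ηᵀf(x) = 0, and that for all x with ‖x‖₂ ≤ δ: (f(x))_m² ≤ δ² xᵀ(R_m R_m)x for each m = 1, …, n and ‖f(x)‖₂² ≤ δ² xᵀJ_F x, where δ > 0. Suppose there exist a symmetric real n×n matrix P, scalars ε > 0, s₀, s₁, …, s_n ≥ 0, and λ₀, λ₁, …, λ_n, κ₁, …, κ_n ∈ ℝ such that P − εI is positive semidefinite and the 2n×2n matrix G := [[LᵀP + PL + εI + s₀δ²J_F + Σ_{m=1}^n s_m δ² R_m R_m , P + Σ_{i=0}^n λ_i M_i ],[ (P + Σ_{i=0}^n λ_i M_i)ᵀ , −s₀I − Σ_{m=1}^n s_m e_m e_mᵀ + Σ_{j=1}^n κ_j T_j ]] is negative semidefinite, where M₀ := I, M_i := e_i ηᵀ (i = 1, …, n), T_j := e_j ηᵀ + η e_jᵀ (j = 1, …, n). Set δ_f := δ √(μ_min(P)/μ_max(P)). Then every differentiable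 trajectory a : [0,∞) → ℝⁿ satisfying a′(t) = L a(t) + f(a(t)) for all t ≥ 0 and ‖a(0)‖₂ ≤ δ_f converges to the origin: a(t) → 0 as t → ∞. -/

import Mathlib

open Matrix

lemma aux_vecMulVec_mulVec {n : Type*} [Fintype n] (u v w : n → ℝ) :
    Matrix.vecMulVec u v *ᵥ w = (v ⬝ᵥ w) • u := by
  ext i
  simp only [vecMulVec, mulVec, dotProduct, of_apply, Pi.smul_apply, smul_eq_mul,
    Finset.sum_mul, Finset.mul_sum]
  exact Finset.sum_congr rfl (fun j _ => by ring)

lemma aux_dot_transpose {m n : Type*} [Fintype m] [Fintype n]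
    (M : Matrix m n ℝ) (v : n → ℝ) (w : m → ℝ) :
    v ⬝ᵥ Mᵀ *ᵥ w = w ⬝ᵥ M *ᵥ v := by
  rw [Matrix.dotProduct_mulVec, Matrix.vecMul_transpose, dotProduct_comm]

lemma aux_sum_mulVec {n m : Type*} [Fintype n] [Fintype m] (s : Finset m)
    (M : m → Matrix n n ℝ) (x : n → ℝ) :
    (∑ i ∈ s, M i) *ᵥ x = ∑ i ∈ s, M i *ᵥ x := by
  classical
  induction s using Finset.induction with
  | empty => simp
  | insert _ _ h ih => simp [Finset.sum_insert h, Matrix.add_mulVec, ih]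

lemma aux_dotProduct_sum {n m : Type*} [Fintype n] [Fintype m] (s : Finset m)
    (x : n → ℝ) (v : m → n → ℝ) :
    x ⬝ᵥ (∑ i ∈ s, v i) = ∑ i ∈ s, x ⬝ᵥ v i := by
  classical
  induction s using Finset.induction with
  | empty => simp
  | insert _ _ h ih => simp [Finset.sum_insert h, dotProduct_add, ih]

lemma aux_hasDerivAt_quad {n : ℕ} (P : Matrix (Fin n) (Fin n) ℝ)
    (a : ℝ → (Fin n → ℝ)) (v : Fin n → ℝ) (t : ℝ) (ha : HasDerivAt a v t) :
    HasDerivAt (fun t => a t ⬝ᵥ P *ᵥ a t) (v ⬝ᵥ P *ᵥ a t + a t ⬝ᵥ P *ᵥ v) t := by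
  have h1 : ∀ i, HasDerivAt (fun t => a t i) (v i) t := hasDerivAt_pi.1 ha
  have h2 : ∀ i, HasDerivAt (fun t => ∑ j, P i j * a t j) (∑ j, P i j * v j) t :=
    fun i => HasDerivAt.fun_sum (fun j _ => (h1 j).const_mul (P i j))
  have h3 : HasDerivAt (fun t => ∑ i, a t i * ∑ j, P i j * a t j)
      (∑ i, (v i * ∑ j, P i j * a t j + a t i * ∑ j, P i j * v j)) t :=
    HasDerivAt.fun_sum (fun i _ => (h1 i).mul (h2 i))
  have e1 : (fun t => a t ⬝ᵥ P *ᵥ a t) = fun t => ∑ i, a t i * ∑ j, P i j * a t j := by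
    funext t; simp [dotProduct, mulVec]
  have e2 : v ⬝ᵥ P *ᵥ a t + a t ⬝ᵥ P *ᵥ v
      = ∑ i, (v i * ∑ j, P i j * a t j + a t i * ∑ j, P i j * v j) := by
    simp [dotProduct, mulVec, Finset.sum_add_distrib]
  rw [e1, e2]; exact h3

lemma aux_eventually_lt {W : ℝ → ℝ} {t0 d : ℝ} (h : HasDerivAt W d t0) (hd : d < 0) :
    ∀ᶠ s in nhdsWithin t0 (Set.Ioi t0), W s < W t0 := by
  have hs : Filter.Tendsto (slope W t0) (nhdsWithin t0 (Set.Ioi t0)) (nhds d) :=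
    (hasDerivAt_iff_tendsto_slope.1 h).mono_left
      (nhdsWithin_mono _ (fun x hx => ne_of_gt hx))
  have hneg : ∀ᶠ s in nhdsWithin t0 (Set.Ioi t0), slope W t0 s < 0 :=
    hs.eventually_lt_const hd
  filter_upwards [hneg, self_mem_nhdsWithin] with s hs1 hs2
  rw [slope_def_field] at hs1
  have hpos : (0:ℝ) < s - t0 := sub_pos.2 hs2
  have := mul_neg_of_neg_of_pos hs1 hpos
  rw [div_mul_cancel₀] at this
  · linarith
  · exact ne_of_gt hpos

lemma aux_rayleigh {n : ℕ} (P : Matrix (Fin n) (Fin n) ℝ) (hP : P.IsHermitian)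
    (hne : (Finset.univ : Finset (Fin n)).Nonempty) (x : Fin n → ℝ) :
    Finset.univ.inf' hne hP.eigenvalues * (x ⬝ᵥ x) ≤ x ⬝ᵥ P *ᵥ x ∧
    x ⬝ᵥ P *ᵥ x ≤ Finset.univ.sup' hne hP.eigenvalues * (x ⬝ᵥ x) := by
  set U : Matrix (Fin n) (Fin n) ℝ := (hP.eigenvectorUnitary : Matrix (Fin n) (Fin n) ℝ) with hU
  have hUmem := hP.eigenvectorUnitary.2
  have hUU : U * Uᵀ = 1 := by
    have := Matrix.mem_unitaryGroup_iff.mp hUmem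
    rwa [star_eq_conjTranspose, conjTranspose_eq_transpose_of_trivial] at this
  set e := hP.eigenvalues with he
  set y := Uᵀ *ᵥ x with hy
  have hyy : y ⬝ᵥ y = x ⬝ᵥ x := by
    rw [hy, Matrix.dotProduct_mulVec, Matrix.vecMul_transpose, Matrix.mulVec_mulVec, hUU,
      Matrix.one_mulVec]
  have hform : x ⬝ᵥ P *ᵥ x = ∑ i, e i * (y i) ^ 2 := by
    conv_lhs => rw [hP.spectral_theorem]
    rw [Unitary.conjStarAlgAut_apply, star_eq_conjTranspose, conjTranspose_eq_transpose_of_trivial, ← hU,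
      RCLike.ofReal_real_eq_id]
    rw [← Matrix.mulVec_mulVec, ← Matrix.mulVec_mulVec, Matrix.dotProduct_mulVec (A := U)]
    rw [← Matrix.mulVec_transpose, ← hy]
    simp only [dotProduct, Matrix.mulVec_diagonal, Function.comp_apply, id_eq]
    exact Finset.sum_congr rfl (fun i _ => by ring)
  constructor
  · rw [hform, ← hyy]
    rw [dotProduct, Finset.mul_sum]
    apply Finset.sum_le_sum
    intro i _
    have : y i * y i = y i ^ 2 := by ring
    rw [this]
    exact mul_le_mul_of_nonneg_right (Finset.inf'_le _ (Finset.mem_univ i)) (sq_nonneg _)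
  · rw [hform, ← hyy]
    rw [dotProduct, Finset.mul_sum]
    apply Finset.sum_le_sum
    intro i _
    have : y i * y i = y i ^ 2 := by ring
    rw [this]
    exact mul_le_mul_of_nonneg_right (Finset.le_sup' _ (Finset.mem_univ i)) (sq_nonneg _)

lemma aux_key {n : ℕ}
    (L P JF : Matrix (Fin n) (Fin n) ℝ) (R : Fin n → Matrix (Fin n) (Fin n) ℝ)
    (η x y : Fin n → ℝ) (δ ε s₀ lam₀ : ℝ) (s lam κ : Fin n → ℝ)
    (hPt : Pᵀ = P)
    (hy0 : x ⬝ᵥ y = 0) (hη0 : η ⬝ᵥ y = 0)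
    (hb1 : ∀ m, (y m) ^ 2 ≤ δ ^ 2 * (x ⬝ᵥ (R m * R m) *ᵥ x))
    (hb2 : y ⬝ᵥ y ≤ δ ^ 2 * (x ⬝ᵥ JF *ᵥ x))
    (hs₀ : 0 ≤ s₀) (hs : ∀ m, 0 ≤ s m)
    (hG : Sum.elim x y ⬝ᵥ (fromBlocks
        (Lᵀ * P + P * L + ε • (1 : Matrix (Fin n) (Fin n) ℝ) + (s₀ * δ ^ 2) • JF
          + ∑ m, (s m * δ ^ 2) • (R m * R m))
        (P + lam₀ • (1 : Matrix (Fin n) (Fin n) ℝ)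
          + ∑ i, lam i • vecMulVec (Pi.single i 1) η)
        (P + lam₀ • (1 : Matrix (Fin n) (Fin n) ℝ)
          + ∑ i, lam i • vecMulVec (Pi.single i 1) η)ᵀ
        (-(s₀ • (1 : Matrix (Fin n) (Fin n) ℝ))
          - ∑ m, s m • vecMulVec (Pi.single m 1) (Pi.single m 1)
          + ∑ j, κ j • (vecMulVec (Pi.single j 1) η
            + vecMulVec η (Pi.single j 1)))).mulVec (Sum.elim x y) ≤ 0) :
    (L *ᵥ x + y) ⬝ᵥ P *ᵥ x + x ⬝ᵥ P *ᵥ (L *ᵥ x + y) ≤ -(ε * (x ⬝ᵥ x)) := by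
  set B : Matrix (Fin n) (Fin n) ℝ :=
    P + lam₀ • (1 : Matrix (Fin n) (Fin n) ℝ)
      + ∑ i, lam i • vecMulVec (Pi.single i 1) η with hB
  rw [fromBlocks_mulVec, sumElim_dotProduct_sumElim] at hG
  simp only [Sum.elim_comp_inl, Sum.elim_comp_inr] at hG
  rw [dotProduct_add, dotProduct_add] at hG
  rw [aux_dot_transpose] at hG
  have hη0' : y ⬝ᵥ η = 0 := by rwa [dotProduct_comm] at hη0
  -- B-block
  have hBy : x ⬝ᵥ B *ᵥ y = x ⬝ᵥ P *ᵥ y := by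
    rw [hB, Matrix.add_mulVec, Matrix.add_mulVec, aux_sum_mulVec]
    simp only [Matrix.smul_mulVec, Matrix.one_mulVec, aux_vecMulVec_mulVec, hη0,
      zero_smul, smul_zero, Finset.sum_const_zero, dotProduct_add, dotProduct_smul,
      smul_eq_mul, hy0, mul_zero, add_zero, dotProduct_zero]
  -- A-block
  have hAx : x ⬝ᵥ (Lᵀ * P + P * L + ε • (1 : Matrix (Fin n) (Fin n) ℝ) + (s₀ * δ ^ 2) • JF
      + ∑ m, (s m * δ ^ 2) • (R m * R m)) *ᵥ x
      = x ⬝ᵥ (Lᵀ * P) *ᵥ x + x ⬝ᵥ (P * L) *ᵥ x + ε * (x ⬝ᵥ x)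
        + s₀ * δ ^ 2 * (x ⬝ᵥ JF *ᵥ x) + ∑ m, s m * δ ^ 2 * (x ⬝ᵥ (R m * R m) *ᵥ x) := by
    rw [Matrix.add_mulVec, Matrix.add_mulVec, Matrix.add_mulVec, Matrix.add_mulVec,
      aux_sum_mulVec]
    simp only [Matrix.smul_mulVec, Matrix.one_mulVec, dotProduct_add, dotProduct_smul,
      smul_eq_mul, aux_dotProduct_sum]
  -- D-block
  have hDy : y ⬝ᵥ (-(s₀ • (1 : Matrix (Fin n) (Fin n) ℝ))
          - ∑ m, s m • vecMulVec (Pi.single m 1) (Pi.single m 1)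
          + ∑ j, κ j • (vecMulVec (Pi.single j 1) η
            + vecMulVec η (Pi.single j 1))) *ᵥ y
      = -(s₀ * (y ⬝ᵥ y)) - ∑ m, s m * (y m) ^ 2 := by
    rw [Matrix.add_mulVec, Matrix.sub_mulVec, Matrix.neg_mulVec, aux_sum_mulVec,
      aux_sum_mulVec, dotProduct_add, dotProduct_sub, dotProduct_neg, aux_dotProduct_sum,
      aux_dotProduct_sum]
    have c1 : y ⬝ᵥ (s₀ • (1 : Matrix (Fin n) (Fin n) ℝ)) *ᵥ y = s₀ * (y ⬝ᵥ y) := by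
      rw [Matrix.smul_mulVec, Matrix.one_mulVec, dotProduct_smul, smul_eq_mul]
    have c2 : ∀ m : Fin n, y ⬝ᵥ (s m • vecMulVec (Pi.single m 1) (Pi.single m 1)) *ᵥ y
        = s m * (y m) ^ 2 := by
      intro m
      rw [Matrix.smul_mulVec, aux_vecMulVec_mulVec, dotProduct_smul, dotProduct_smul,
        single_dotProduct, dotProduct_single]
      simp only [smul_eq_mul, one_mul, mul_one]
      ring
    have c3 : ∀ j : Fin n, y ⬝ᵥ (κ j • (vecMulVec (Pi.single j 1) η
        + vecMulVec η (Pi.single j 1))) *ᵥ y = 0 := by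
      intro j
      rw [Matrix.smul_mulVec, Matrix.add_mulVec, aux_vecMulVec_mulVec,
        aux_vecMulVec_mulVec, hη0, single_dotProduct, one_mul]
      simp only [dotProduct_smul, dotProduct_add, smul_eq_mul, zero_smul, dotProduct_zero,
        dotProduct_smul, hη0', mul_zero, add_zero, zero_add]
    rw [c1, Finset.sum_congr rfl (fun m _ => c2 m), Finset.sum_congr rfl (fun j _ => c3 j)]
    simp only [Finset.sum_const_zero, add_zero]
  rw [hAx, hBy, hDy] at hG
  -- goal rewriting
  have e1 : (L *ᵥ x) ⬝ᵥ P *ᵥ x = x ⬝ᵥ (Lᵀ * P) *ᵥ x := by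
    rw [← Matrix.mulVec_mulVec, aux_dot_transpose, dotProduct_comm]
  have e2 : y ⬝ᵥ P *ᵥ x = x ⬝ᵥ P *ᵥ y := by
    conv_rhs => rw [← hPt]
    rw [aux_dot_transpose]
  have e3 : x ⬝ᵥ P *ᵥ (L *ᵥ x) = x ⬝ᵥ (P * L) *ᵥ x := by
    rw [Matrix.mulVec_mulVec]
  rw [add_dotProduct, Matrix.mulVec_add, dotProduct_add, e1, e2, e3]
  -- nonnegativity of multiplier terms
  have n1 : 0 ≤ s₀ * (δ ^ 2 * (x ⬝ᵥ JF *ᵥ x)) - s₀ * (y ⬝ᵥ y) := by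
    have := mul_le_mul_of_nonneg_left hb2 hs₀
    linarith
  have n2 : 0 ≤ ∑ m, s m * δ ^ 2 * (x ⬝ᵥ (R m * R m) *ᵥ x) - ∑ m, s m * (y m) ^ 2 := by
    rw [← Finset.sum_sub_distrib]
    apply Finset.sum_nonneg
    intro m _
    have := mul_le_mul_of_nonneg_left (hb1 m) (hs m)
    linarith [this]
  linarith [hG, n1, n2]

/-- Theorem 1, the main result of the paper: feasibility of the LMIs certifies that the
ball of radius `δ_f = δ√(μ_min(P)/μ_max(P))` lies in the region of attraction of the
origin for the Lur'e-type system `ȧ = La + f(a)` whose lossless nonlinearity satisfies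
`aᵀf(a) = 0`, `ηᵀf(a) = 0`, and the local quadratic bounds of Lemma 1 on `‖a‖₂ ≤ δ`. -/
theorem stmt8 (n : ℕ) (hn : 1 ≤ n)
    (L : Matrix (Fin n) (Fin n) ℝ)
    (f : (Fin n → ℝ) → (Fin n → ℝ))
    (η : Fin n → ℝ)
    (R : Fin n → Matrix (Fin n) (Fin n) ℝ) (JF : Matrix (Fin n) (Fin n) ℝ)
    (hRsym : ∀ m, (R m).IsSymm) (hJFsym : JF.IsSymm)
    (δ : ℝ) (hδ : 0 < δ)
    (hlossless : ∀ x : Fin n → ℝ, x ⬝ᵥ f x = 0)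
    (horth : ∀ x : Fin n → ℝ, η ⬝ᵥ f x = 0)
    (hlocal1 : ∀ x : Fin n → ℝ, Real.sqrt (x ⬝ᵥ x) ≤ δ →
      ∀ m, (f x m) ^ 2 ≤ δ ^ 2 * (x ⬝ᵥ (R m * R m).mulVec x))
    (hlocal2 : ∀ x : Fin n → ℝ, Real.sqrt (x ⬝ᵥ x) ≤ δ →
      f x ⬝ᵥ f x ≤ δ ^ 2 * (x ⬝ᵥ JF.mulVec x))
    (P : Matrix (Fin n) (Fin n) ℝ) (hP : P.IsHermitian)
    (ε : ℝ) (hε : 0 < ε)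
    (s₀ : ℝ) (s : Fin n → ℝ) (hs₀ : 0 ≤ s₀) (hs : ∀ m, 0 ≤ s m)
    (lam₀ : ℝ) (lam κ : Fin n → ℝ)
    (hPpos : ∀ x : Fin n → ℝ,
      0 ≤ x ⬝ᵥ (P - ε • (1 : Matrix (Fin n) (Fin n) ℝ)).mulVec x)
    (hGneg : ∀ z : (Fin n ⊕ Fin n) → ℝ,
      z ⬝ᵥ (fromBlocks
        (Lᵀ * P + P * L + ε • (1 : Matrix (Fin n) (Fin n) ℝ) + (s₀ * δ ^ 2) • JF
          + ∑ m, (s m * δ ^ 2) • (R m * R m))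
        (P + lam₀ • (1 : Matrix (Fin n) (Fin n) ℝ)
          + ∑ i, lam i • vecMulVec (Pi.single i 1) η)
        (P + lam₀ • (1 : Matrix (Fin n) (Fin n) ℝ)
          + ∑ i, lam i • vecMulVec (Pi.single i 1) η)ᵀ
        (-(s₀ • (1 : Matrix (Fin n) (Fin n) ℝ))
          - ∑ m, s m • vecMulVec (Pi.single m 1) (Pi.single m 1)
          + ∑ j, κ j • (vecMulVec (Pi.single j 1) η
            + vecMulVec η (Pi.single j 1)))).mulVec z ≤ 0)
    (δf : ℝ)
    (hδf : δf = δ * Real.sqrt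
      (Finset.univ.inf' (Finset.univ_nonempty_iff.mpr ⟨⟨0, hn⟩⟩) hP.eigenvalues /
        Finset.univ.sup' (Finset.univ_nonempty_iff.mpr ⟨⟨0, hn⟩⟩) hP.eigenvalues))
    (a : ℝ → (Fin n → ℝ))
    (hderiv : ∀ t : ℝ, 0 ≤ t → HasDerivAt a (L.mulVec (a t) + f (a t)) t)
    (hinit : Real.sqrt (a 0 ⬝ᵥ a 0) ≤ δf) :
    Filter.Tendsto a Filter.atTop (nhds 0) := by
  classical
  have hne : (Finset.univ : Finset (Fin n)).Nonempty := Finset.univ_nonempty_iff.mpr ⟨⟨0, hn⟩⟩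
  set μ₁ := Finset.univ.inf' hne hP.eigenvalues with hμ₁def
  set μ₂ := Finset.univ.sup' hne hP.eigenvalues with hμ₂def
  have hPt : Pᵀ = P := by
    have := hP
    rwa [Matrix.IsHermitian, conjTranspose_eq_transpose_of_trivial] at this
  have hdd : ∀ x : Fin n → ℝ, 0 ≤ x ⬝ᵥ x :=
    fun x => Finset.sum_nonneg (fun i _ => mul_self_nonneg _)
  -- all eigenvalues at least ε
  have heig : ∀ i, ε ≤ hP.eigenvalues i := by
    intro i
    set v : Fin n → ℝ := ⇑(hP.eigenvectorBasis i) with hv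
    have hnorm : ‖hP.eigenvectorBasis i‖ = 1 := hP.eigenvectorBasis.orthonormal.1 i
    have hvv : v ⬝ᵥ v = 1 := by
      have h1 : ‖hP.eigenvectorBasis i‖ = Real.sqrt (∑ j, ‖hP.eigenvectorBasis i j‖ ^ 2) :=
        EuclideanSpace.norm_eq _
      rw [hnorm] at h1
      have h2 : (∑ j, ‖hP.eigenvectorBasis i j‖ ^ 2) = v ⬝ᵥ v := by
        simp [dotProduct, Real.norm_eq_abs, sq_abs, hv, pow_two]
      rw [h2] at h1
      exact (Real.sqrt_eq_one.1 h1.symm)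
    have hPv : P *ᵥ v = hP.eigenvalues i • v := hP.mulVec_eigenvectorBasis i
    have hq := hPpos v
    rw [Matrix.sub_mulVec, dotProduct_sub, hPv, Matrix.smul_mulVec,
      Matrix.one_mulVec, dotProduct_smul, dotProduct_smul, smul_eq_mul, smul_eq_mul,
      hvv] at hq
    linarith
  have hεμ₁ : ε ≤ μ₁ := Finset.le_inf' hne _ (fun i _ => heig i)
  have hμ₁pos : 0 < μ₁ := lt_of_lt_of_le hε hεμ₁
  have hμ₁₂ : μ₁ ≤ μ₂ :=
    le_trans (Finset.inf'_le _ (Finset.mem_univ (⟨0, hn⟩ : Fin n)))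
      (Finset.le_sup' _ (Finset.mem_univ (⟨0, hn⟩ : Fin n)))
  have hμ₂pos : 0 < μ₂ := lt_of_lt_of_le hμ₁pos hμ₁₂
  set W : ℝ → ℝ := fun t => a t ⬝ᵥ P *ᵥ a t with hWdef
  have hRay := fun x => aux_rayleigh P hP hne x
  set c := μ₁ * δ ^ 2 with hcdef
  -- initial condition
  have hW0 : W 0 ≤ c := by
    have h1 : a 0 ⬝ᵥ a 0 ≤ δf ^ 2 := by
      have hsq := Real.sq_sqrt (hdd (a 0))
      nlinarith [hinit, Real.sqrt_nonneg (a 0 ⬝ᵥ a 0)]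
    have h2 : δf ^ 2 = δ ^ 2 * (μ₁ / μ₂) := by
      rw [hδf, mul_pow, Real.sq_sqrt (by positivity : (0:ℝ) ≤ μ₁ / μ₂)]
    have h3 := (hRay (a 0)).2
    calc W 0 ≤ μ₂ * (a 0 ⬝ᵥ a 0) := h3
      _ ≤ μ₂ * (δ ^ 2 * (μ₁ / μ₂)) :=
          mul_le_mul_of_nonneg_left (h1.trans_eq h2) hμ₂pos.le
      _ = c := by rw [hcdef]; field_simp
  have hsmall : ∀ t, W t ≤ c → a t ⬝ᵥ a t ≤ δ ^ 2 := by
    intro t h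
    have h1 := (hRay (a t)).1
    nlinarith [hμ₁pos]
  have hDW : ∀ t, 0 ≤ t → HasDerivAt W
      ((L *ᵥ a t + f (a t)) ⬝ᵥ P *ᵥ a t + a t ⬝ᵥ P *ᵥ (L *ᵥ a t + f (a t))) t := by
    intro t ht
    exact aux_hasDerivAt_quad P a _ t (hderiv t ht)
  have hkey : ∀ t, a t ⬝ᵥ a t ≤ δ ^ 2 →
      (L *ᵥ a t + f (a t)) ⬝ᵥ P *ᵥ a t + a t ⬝ᵥ P *ᵥ (L *ᵥ a t + f (a t))
        ≤ -(ε * (a t ⬝ᵥ a t)) := by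
    intro t h
    have hsqle : Real.sqrt (a t ⬝ᵥ a t) ≤ δ := by
      rw [show δ = Real.sqrt (δ ^ 2) from (Real.sqrt_sq hδ.le).symm]
      exact Real.sqrt_le_sqrt h
    exact aux_key L P JF R η (a t) (f (a t)) δ ε s₀ lam₀ s lam κ hPt (hlossless _)
      (horth _) (fun m => hlocal1 _ hsqle m) (hlocal2 _ hsqle) hs₀ hs (hGneg _)
  -- invariance of {W ≤ c}
  have hinv : ∀ t, 0 ≤ t → W t ≤ c := by
    by_contra hcon
    push_neg at hcon
    obtain ⟨t₁, ht₁0, ht₁⟩ := hcon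
    set S : Set ℝ := {t | 0 ≤ t ∧ c < W t} with hSdef
    have hSne : S.Nonempty := ⟨t₁, ht₁0, ht₁⟩
    have hSbdd : BddBelow S := ⟨0, fun t ht => ht.1⟩
    set t₀ := sInf S with ht₀def
    have ht₀0 : 0 ≤ t₀ := le_csInf hSne (fun t ht => ht.1)
    have hltc : ∀ u, 0 ≤ u → u < t₀ → W u ≤ c := by
      intro u hu hut
      by_contra h
      push_neg at h
      exact absurd (csInf_le hSbdd ⟨hu, h⟩) (not_le.2 hut)
    have hWcont : ContinuousAt W t₀ := (hDW t₀ ht₀0).continuousAt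
    have hWt₀ : W t₀ ≤ c := by
      rcases eq_or_lt_of_le ht₀0 with h0 | h0
      · rw [← h0]; exact hW0
      · have hclos : t₀ ∈ closure (Set.Ico 0 t₀) := by
          rw [closure_Ico (ne_of_lt h0)]
          exact Set.right_mem_Icc.2 ht₀0
        have hnb : (nhdsWithin t₀ (Set.Ico 0 t₀)).NeBot :=
          mem_closure_iff_nhdsWithin_neBot.1 hclos
        haveI := hnb
        refine le_of_tendsto
          ((hWcont.continuousWithinAt (s := Set.Ico 0 t₀)).tendsto) ?_
        exact Filter.eventually_of_mem self_mem_nhdsWithin (fun u hu => hltc u hu.1 hu.2)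
    have hat₀ : a t₀ ⬝ᵥ a t₀ ≤ δ ^ 2 := hsmall t₀ hWt₀
    have hub : ∀ᶠ u in nhdsWithin t₀ (Set.Ioi t₀), W u < c := by
      rcases eq_or_lt_of_le hWt₀ with heq | hlt'
      · have hposq : 0 < a t₀ ⬝ᵥ a t₀ := by
          have hq2 : μ₁ * δ ^ 2 ≤ μ₂ * (a t₀ ⬝ᵥ a t₀) := by
            calc μ₁ * δ ^ 2 = c := hcdef.symm
              _ = W t₀ := heq.symm
              _ ≤ μ₂ * (a t₀ ⬝ᵥ a t₀) := (hRay (a t₀)).2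
          by_contra hq
          push_neg at hq
          nlinarith [hq2, mul_pos hμ₁pos (pow_pos hδ 2), hμ₂pos]
        have hdneg : (L *ᵥ a t₀ + f (a t₀)) ⬝ᵥ P *ᵥ a t₀
            + a t₀ ⬝ᵥ P *ᵥ (L *ᵥ a t₀ + f (a t₀)) < 0 := by
          have hk := hkey t₀ hat₀
          nlinarith [mul_pos hε hposq]
        have hev := aux_eventually_lt (hDW t₀ ht₀0) hdneg
        filter_upwards [hev] with u hu
        rw [heq] at hu
        exact hu
      · have hev : ∀ᶠ u in nhds t₀, W u < c := hWcont.eventually_lt_const hlt'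
        exact hev.filter_mono nhdsWithin_le_nhds
    obtain ⟨u, hu, hsub⟩ := mem_nhdsGT_iff_exists_Ioo_subset.1 hub
    obtain ⟨v, hvS, hvu⟩ := exists_lt_of_csInf_lt hSne (show sInf S < u from hu)
    have hvt₀ : t₀ ≤ v := csInf_le hSbdd hvS
    have hvne : t₀ ≠ v := by
      intro h
      rw [← h] at hvS
      exact absurd hWt₀ (not_le.2 hvS.2)
    have : W v < c := hsub ⟨lt_of_le_of_ne hvt₀ hvne, hvu⟩
    exact absurd hvS.2 (not_lt.2 this.le)
  -- exponential decay
  set lam' : ℝ := ε / μ₂ with hlam'def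
  have hlam'pos : 0 < lam' := div_pos hε hμ₂pos
  set g : ℝ → ℝ := fun t => W t * Real.exp (lam' * t) with hgdef
  have hgd : ∀ t, 0 ≤ t → HasDerivAt g
      (((L *ᵥ a t + f (a t)) ⬝ᵥ P *ᵥ a t + a t ⬝ᵥ P *ᵥ (L *ᵥ a t + f (a t)))
        * Real.exp (lam' * t) + W t * (Real.exp (lam' * t) * lam')) t := by
    intro t ht
    have h1 := hDW t ht
    have h2 : HasDerivAt (fun t : ℝ => Real.exp (lam' * t))
        (Real.exp (lam' * t) * lam') t := by
      have h3 : HasDerivAt (fun t : ℝ => lam' * t) lam' t := by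
        simpa using (hasDerivAt_id t).const_mul lam'
      exact h3.exp
    exact h1.mul h2
  have hgmono : AntitoneOn g (Set.Ici (0:ℝ)) := by
    apply antitoneOn_of_deriv_nonpos (convex_Ici 0)
    · intro t ht
      exact ((hgd t ht).continuousAt).continuousWithinAt
    · intro t ht
      rw [interior_Ici] at ht
      exact ((hgd t (le_of_lt ht)).differentiableAt).differentiableWithinAt
    · intro t ht
      rw [interior_Ici] at ht
      have hd := hgd t (le_of_lt ht)
      rw [hd.deriv]
      have h1 := hkey t (hsmall t (hinv t ht.le))
      have h2 := (hRay (a t)).2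
      have h3 : lam' * μ₂ = ε := div_mul_cancel₀ ε (ne_of_gt hμ₂pos)
      have h4 : lam' * W t ≤ ε * (a t ⬝ᵥ a t) := by
        calc lam' * W t ≤ lam' * (μ₂ * (a t ⬝ᵥ a t)) :=
              mul_le_mul_of_nonneg_left h2 hlam'pos.le
          _ = ε * (a t ⬝ᵥ a t) := by rw [← mul_assoc, h3]
      nlinarith [Real.exp_pos (lam' * t)]
  have hWbound : ∀ t, 0 ≤ t → W t ≤ W 0 * Real.exp (-(lam' * t)) := by
    intro t ht
    have hg0 : g t ≤ g 0 := hgmono (Set.mem_Ici.2 le_rfl) ht ht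
    have hg00 : g 0 = W 0 := by simp [hgdef]
    rw [hg00] at hg0
    have hexp := Real.exp_pos (lam' * t)
    have hrw : W 0 * Real.exp (-(lam' * t)) = W 0 / Real.exp (lam' * t) := by
      rw [Real.exp_neg, div_eq_mul_inv]
    rw [hrw, le_div_iff₀ hexp]
    simpa [hgdef] using hg0
  have hfinal : ∀ i, Filter.Tendsto (fun t => a t i) Filter.atTop (nhds 0) := by
    intro i
    have hb : ∀ t : ℝ, 0 ≤ t → ‖a t i‖ ≤ Real.sqrt (W 0 / μ₁ * Real.exp (-(lam' * t))) := by
      intro t ht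
      have h1 : (a t i) ^ 2 ≤ a t ⬝ᵥ a t := by
        have hq : a t ⬝ᵥ a t = ∑ j, a t j * a t j := rfl
        rw [hq, sq]
        exact Finset.single_le_sum (f := fun j => a t j * a t j)
          (fun j _ => mul_self_nonneg _) (Finset.mem_univ i)
      have h2 : μ₁ * (a t ⬝ᵥ a t) ≤ W t := (hRay (a t)).1
      have h3 := hWbound t ht
      have hcancel : W 0 / μ₁ * Real.exp (-(lam' * t)) * μ₁
          = W 0 * Real.exp (-(lam' * t)) := by
        field_simp
      have h4 : (a t i) ^ 2 ≤ W 0 / μ₁ * Real.exp (-(lam' * t)) := by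
        nlinarith [hμ₁pos]
      have h5 : ‖a t i‖ = Real.sqrt ((a t i) ^ 2) := by
        rw [Real.sqrt_sq_eq_abs, Real.norm_eq_abs]
      rw [h5]
      exact Real.sqrt_le_sqrt h4
    have htend : Filter.Tendsto (fun t => Real.sqrt (W 0 / μ₁ * Real.exp (-(lam' * t))))
        Filter.atTop (nhds 0) := by
      have h1 : Filter.Tendsto (fun t : ℝ => lam' * t) Filter.atTop Filter.atTop :=
        Filter.Tendsto.const_mul_atTop hlam'pos Filter.tendsto_id
      have h2 : Filter.Tendsto (fun t : ℝ => -(lam' * t)) Filter.atTop Filter.atBot :=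
        Filter.tendsto_neg_atTop_atBot.comp h1
      have h3 : Filter.Tendsto (fun t : ℝ => Real.exp (-(lam' * t))) Filter.atTop (nhds 0) :=
        Real.tendsto_exp_atBot.comp h2
      have h4 : Filter.Tendsto (fun t : ℝ => W 0 / μ₁ * Real.exp (-(lam' * t)))
          Filter.atTop (nhds 0) := by
        have h5 := h3.const_mul (W 0 / μ₁)
        simpa using h5
      exact (Real.continuous_sqrt.tendsto' 0 0 Real.sqrt_zero).comp h4
    exact squeeze_zero_norm' (Filter.eventually_atTop.2 ⟨0, hb⟩) htend
  rw [tendsto_pi_nhds]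
  intro i
  simpa using hfinal i
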